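/- arXiv:0709.0071 — 2 statements merged into one kernel-verified Lean document; each statement's English description precedes it below -/
import Mathlib

section
/- (Covariance, inversion case, n = m = 1) For M > 0 an integer (or positive real), τ ∈ ℂ with Im τ > 0, z ∈ ℂ, and x ∈ ℝ: (1/i)^(1/2) M^(1/2) ∫_ℝ exp(πi M (y²τ + 2yz)) exp(−2πi M y x) dy = τ^(−1/2) exp(−πi M (z² + x² − 2zx)/τ), i.e., the Fourier-type transform of the Gaussian F^(M)_{τ,z} equals τ^(−1/2) exp(−πiMz²/τ) F^(M)_{−1/τ, z/τ}(x). -/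
open Complex

private lemma key_sum_log (M : ℝ) (hM : 0 < M) (τ : ℂ) (hτ : 0 < τ.im) :
    Complex.log (1 / I) + Complex.log (M : ℂ) + Complex.log (I / ((M : ℂ) * τ)) =
      -Complex.log τ := by
  have hτ0 : τ ≠ 0 := fun h => by simp [h] at hτ
  have hM0 : (M : ℂ) ≠ 0 := by exact_mod_cast hM.ne'
  have hw0 : I / ((M : ℂ) * τ) ≠ 0 := div_ne_zero I_ne_zero (mul_ne_zero hM0 hτ0)
  have hre : 0 < (I / ((M : ℂ) * τ)).re := by
    have h := Complex.normSq_pos.mpr (mul_ne_zero hM0 hτ0)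
    simp only [Complex.div_re, Complex.I_re, Complex.I_im, zero_mul, one_mul, zero_div,
      zero_add, Complex.mul_im, Complex.ofReal_re, Complex.ofReal_im, mul_zero, add_zero]
    exact div_pos (mul_pos hM hτ) h
  have hargw : |Complex.arg (I / ((M : ℂ) * τ))| < Real.pi / 2 :=
    Complex.abs_arg_lt_pi_div_two_iff.mpr (Or.inl hre)
  have hargw1 : -(Real.pi / 2) < Complex.arg (I / ((M : ℂ) * τ)) := (abs_lt.mp hargw).1
  have hargw2 : Complex.arg (I / ((M : ℂ) * τ)) < Real.pi / 2 := (abs_lt.mp hargw).2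
  have hargτ1 : 0 < Complex.arg τ := by
    rcases (Complex.arg_nonneg_iff.mpr hτ.le).lt_or_eq with h | h
    · exact h
    · exact absurd (Complex.arg_eq_zero_iff.mp h.symm).2 hτ.ne'
  have hargτ2 : Complex.arg τ < Real.pi :=
    Complex.arg_lt_pi_iff.mpr (Or.inr hτ.ne')
  have hexp : Complex.exp (Complex.log (1 / I) + Complex.log (M : ℂ) +
      Complex.log (I / ((M : ℂ) * τ))) = Complex.exp (-Complex.log τ) := by
    rw [Complex.exp_add, Complex.exp_add, Complex.exp_log (one_div_ne_zero I_ne_zero),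
      Complex.exp_log hM0, Complex.exp_log hw0, Complex.exp_neg, Complex.exp_log hτ0]
    field_simp
  obtain ⟨n, hn⟩ := Complex.exp_eq_exp_iff_exists_int.mp hexp
  have him := congrArg Complex.im hn
  simp only [Complex.add_im, Complex.log_im, Complex.neg_im, Complex.mul_im,
    Complex.intCast_re, Complex.intCast_im, Complex.re_ofNat, Complex.im_ofNat,
    Complex.ofReal_re, Complex.ofReal_im, Complex.I_re, Complex.I_im,
    Complex.mul_re] at him
  rw [one_div, Complex.inv_I, Complex.arg_neg_I,
    Complex.arg_ofReal_of_nonneg hM.le] at him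
  have hn0 : n = 0 := by
    have hπ := Real.pi_pos
    have h1 : -(2 * Real.pi) < 2 * Real.pi * (n : ℝ) := by nlinarith
    have h2 : 2 * Real.pi * (n : ℝ) < 2 * Real.pi := by nlinarith
    have l1 : (-1 : ℝ) < (n : ℝ) := by nlinarith
    have l2 : (n : ℝ) < 1 := by nlinarith
    have : (-1 : ℤ) < n := by exact_mod_cast l1
    have : n < 1 := by exact_mod_cast l2
    omega
  rw [hn0] at hn
  simpa using hn

private lemma key_cpow (M : ℝ) (hM : 0 < M) (τ : ℂ) (hτ : 0 < τ.im) :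
    (1 / I) ^ (1 / 2 : ℂ) * (M : ℂ) ^ (1 / 2 : ℂ) * (I / ((M : ℂ) * τ)) ^ (1 / 2 : ℂ) =
      τ ^ (-(1 / 2 : ℂ)) := by
  have hτ0 : τ ≠ 0 := fun h => by simp [h] at hτ
  have hM0 : (M : ℂ) ≠ 0 := by exact_mod_cast hM.ne'
  have hw0 : I / ((M : ℂ) * τ) ≠ 0 := div_ne_zero I_ne_zero (mul_ne_zero hM0 hτ0)
  rw [Complex.cpow_def_of_ne_zero (one_div_ne_zero I_ne_zero),
    Complex.cpow_def_of_ne_zero hM0, Complex.cpow_def_of_ne_zero hw0,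
    Complex.cpow_def_of_ne_zero hτ0, ← Complex.exp_add, ← Complex.exp_add]
  congr 1
  linear_combination (1 / 2 : ℂ) * key_sum_log M hM τ hτ

/-- Covariance relation, inversion case (`n = m = 1`): the Fourier-type transform of
the Gaussian `F^(M)_{τ,z}(y) = exp(πiM(y²τ + 2yz))` satisfies
`(1/i)^(1/2) M^(1/2) ∫_ℝ F^(M)_{τ,z}(y) e^(−2πiMyx) dy
  = τ^(−1/2) exp(−πiM(z² + x² − 2zx)/τ)`. -/
theorem covariance_inversion (M : ℝ) (hM : 0 < M) (τ z : ℂ) (hτ : 0 < τ.im) (x : ℝ) :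
    (1 / Complex.I) ^ ((1 / 2 : ℂ)) * (M : ℂ) ^ ((1 / 2 : ℂ)) *
        ∫ y : ℝ, Complex.exp ((Real.pi : ℂ) * Complex.I * (M : ℂ) *
            ((y : ℂ) ^ 2 * τ + 2 * (y : ℂ) * z)) *
          Complex.exp (-2 * (Real.pi : ℂ) * Complex.I * (M : ℂ) * (y : ℂ) * (x : ℂ)) =
      τ ^ (-(1 / 2 : ℂ)) *
        Complex.exp (-(Real.pi : ℂ) * Complex.I * (M : ℂ) *
          (z ^ 2 + (x : ℂ) ^ 2 - 2 * z * (x : ℂ)) / τ) := by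
  have hτ0 : τ ≠ 0 := fun h => by simp [h] at hτ
  have hM0 : (M : ℂ) ≠ 0 := by exact_mod_cast hM.ne'
  set b : ℂ := (Real.pi : ℂ) * Complex.I * (M : ℂ) * τ with hb_def
  set c : ℂ := 2 * (Real.pi : ℂ) * Complex.I * (M : ℂ) * (z - (x : ℂ)) with hc_def
  have hb : b.re < 0 := by
    simp only [hb_def, Complex.mul_re, Complex.mul_im, Complex.ofReal_re, Complex.ofReal_im,
      Complex.I_re, Complex.I_im, mul_zero, mul_one, zero_mul, zero_sub, sub_zero, add_zero,
      zero_add]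
    nlinarith [mul_pos (mul_pos Real.pi_pos hM) hτ]
  have hint : ∀ y : ℝ,
      Complex.exp ((Real.pi : ℂ) * Complex.I * (M : ℂ) *
            ((y : ℂ) ^ 2 * τ + 2 * (y : ℂ) * z)) *
          Complex.exp (-2 * (Real.pi : ℂ) * Complex.I * (M : ℂ) * (y : ℂ) * (x : ℂ)) =
        Complex.exp (b * (y : ℂ) ^ 2 + c * (y : ℂ) + 0) := by
    intro y
    rw [← Complex.exp_add]
    congr 1
    simp only [hb_def, hc_def]
    ring
  rw [MeasureTheory.integral_congr_ae (Filter.Eventually.of_forall hint), integral_cexp_quadratic hb c 0]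
  have hπ : (Real.pi : ℂ) ≠ 0 := Complex.ofReal_ne_zero.mpr Real.pi_ne_zero
  have hb0 : b ≠ 0 := by
    simp only [hb_def]
    exact mul_ne_zero (mul_ne_zero (mul_ne_zero hπ Complex.I_ne_zero) hM0) hτ0
  have hπb : (Real.pi : ℂ) / -b = I / ((M : ℂ) * τ) := by
    rw [div_eq_div_iff (neg_ne_zero.mpr hb0) (mul_ne_zero hM0 hτ0), hb_def]
    linear_combination ((Real.pi : ℂ) * (M : ℂ) * τ) * Complex.I_mul_I
  have hexp : Complex.exp (0 - c ^ 2 / (4 * b)) =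
      Complex.exp (-(Real.pi : ℂ) * Complex.I * (M : ℂ) *
        (z ^ 2 + (x : ℂ) ^ 2 - 2 * z * (x : ℂ)) / τ) := by
    congr 1
    field_simp [hb_def, hc_def]
    ring
  rw [hπb, hexp, ← mul_assoc, key_cpow M hM τ hτ]
end

section
/- The theta series Θ_M(Ω,Z) = Σ_{ξ ∈ ℤ^(m×n)} exp(πi·tr(M(ξΩξᵀ + 2ξZᵀ))) converges absolutely for every Ω ∈ ℍ_n and Z ∈ ℂ^(m×n), when M is a symmetric positive definite real m×m matrix. -/
open Matrix

section ThetaAux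

open Finset

private lemma theta_summable_pi_fin {β : Type*} (g : β → ℝ) (h0 : ∀ x, 0 ≤ g x)
    (hg : Summable g) :
    ∀ (k : ℕ), Summable fun x : Fin k → β => ∏ i, g (x i) := by
  intro k
  induction k with
  | zero => exact Summable.of_finite
  | succ k ih =>
    have h := (hg.mul_of_nonneg ih h0 (fun x => Finset.prod_nonneg fun i _ => h0 _))
    rw [← (Fin.consEquiv fun _ => β).summable_iff]
    convert h using 1
    ext p
    simp [Fin.consEquiv, Fin.prod_univ_succ]

variable {m n : ℕ}

private lemma theta_im_trace_real_mul (P : Matrix (Fin m) (Fin m) ℝ)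
    (N : Matrix (Fin m) (Fin m) ℂ) :
    (trace (P.map Complex.ofReal * N)).im = trace (P * N.map Complex.im) := by
  simp [Matrix.trace, Matrix.diag_apply, mul_apply, Complex.im_sum, Complex.mul_im]

private lemma theta_map_im_real_mul {c : ℕ} (P : Matrix (Fin m) (Fin n) ℝ)
    (N : Matrix (Fin n) (Fin c) ℂ) :
    ((P.map Complex.ofReal) * N).map Complex.im = P * N.map Complex.im := by
  ext i j
  simp [mul_apply, Complex.im_sum, Complex.mul_im]

private lemma theta_map_im_mul_real {c : ℕ} (N : Matrix (Fin m) (Fin n) ℂ)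
    (P : Matrix (Fin n) (Fin c) ℝ) :
    (N * (P.map Complex.ofReal)).map Complex.im = N.map Complex.im * P := by
  ext i j
  simp [mul_apply, Complex.im_sum, Complex.mul_im]

private lemma theta_term_norm (M : Matrix (Fin m) (Fin m) ℝ)
    (Ω : Matrix (Fin n) (Fin n) ℂ) (Z : Matrix (Fin m) (Fin n) ℂ)
    (ξ : Matrix (Fin m) (Fin n) ℤ) :
    ‖Complex.exp ((Real.pi : ℂ) * Complex.I *
        ((M.map Complex.ofReal) *
          (ξ.map (fun a => (a : ℂ)) * Ω * (ξ.map (fun a => (a : ℂ)))ᵀ +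
            2 • (ξ.map (fun a => (a : ℂ)) * Zᵀ))).trace)‖ =
      Real.exp (-Real.pi *
        (trace (M * ((ξ.map (fun a => (a : ℝ))) * (Ω.map Complex.im) * (ξ.map (fun a => (a : ℝ)))ᵀ))
        + 2 * trace (M * ((ξ.map (fun a => (a : ℝ))) * (Z.map Complex.im)ᵀ)))) := by
  set A := ξ.map (fun a => (a : ℝ)) with hA
  have hcast : ξ.map (fun a => (a : ℂ)) = A.map Complex.ofReal := by
    ext i j; simp [hA]
  have h2 : ((ξ.map (fun a => (a:ℂ))) * Ω * (ξ.map (fun a => (a:ℂ)))ᵀ).map Complex.im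
      = A * (Ω.map Complex.im) * Aᵀ := by
    rw [hcast, ← Matrix.transpose_map, theta_map_im_mul_real, theta_map_im_real_mul]
  have h3 : ((ξ.map (fun a => (a:ℂ))) * Zᵀ).map Complex.im = A * (Z.map Complex.im)ᵀ := by
    rw [hcast, theta_map_im_real_mul, ← Matrix.transpose_map]
  have hmap : (ξ.map (fun a => (a : ℂ)) * Ω * (ξ.map (fun a => (a : ℂ)))ᵀ +
      2 • (ξ.map (fun a => (a : ℂ)) * Zᵀ)).map Complex.im
      = A * (Ω.map Complex.im) * Aᵀ + 2 • (A * (Z.map Complex.im)ᵀ) := by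
    ext i j
    have e2 := congrFun (congrFun h2 i) j
    have e3 := congrFun (congrFun h3 i) j
    simp only [Matrix.map_apply] at e2 e3
    simp only [Matrix.map_apply, Matrix.add_apply, Matrix.smul_apply, Complex.add_im,
      two_smul, Complex.add_im]
    rw [e2, e3]
  rw [Complex.norm_exp]
  congr 1
  have hre : ∀ t : ℂ, ((Real.pi : ℂ) * Complex.I * t).re = -Real.pi * t.im := by
    intro t
    simp [Complex.mul_re, Complex.mul_im]
  rw [hre]
  congr 1
  rw [theta_im_trace_real_mul, hmap, mul_add, trace_add, mul_smul_comm, trace_smul]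
  simp

private lemma theta_trace_mul_self_transpose (B : Matrix (Fin m) (Fin n) ℝ) :
    trace (B * Bᵀ) = ∑ p : Fin m × Fin n, (B p.1 p.2) ^ 2 := by
  simp [Matrix.trace, Matrix.diag_apply, mul_apply, sq, Fintype.sum_prod_type]

open scoped MatrixOrder in
private lemma theta_sqrt_exists {k : ℕ} {M : Matrix (Fin k) (Fin k) ℝ} (hM : M.PosDef) :
    ∃ R : Matrix (Fin k) (Fin k) ℝ, R * R = M ∧ Rᵀ = R ∧ IsUnit R.det := by
  refine ⟨CFC.sqrt M, CFC.sqrt_mul_sqrt_self M hM.posSemidef.nonneg, ?_, ?_⟩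
  · have h := (nonneg_iff_posSemidef.mp (CFC.sqrt_nonneg M)).isHermitian
    simpa [Matrix.IsHermitian] using h
  · have h : (CFC.sqrt M).det * (CFC.sqrt M).det = M.det := by
      rw [← det_mul, CFC.sqrt_mul_sqrt_self M hM.posSemidef.nonneg]
    have hMd := hM.det_pos
    refine isUnit_iff_ne_zero.mpr fun h0 => ?_
    rw [h0, mul_zero] at h; rw [← h] at hMd; exact lt_irrefl _ hMd

private lemma theta_quad_lower_bound {M : Matrix (Fin m) (Fin m) ℝ}
    {Y : Matrix (Fin n) (Fin n) ℝ} (hM : M.PosDef) (hY : Y.PosDef) :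
    ∃ c : ℝ, 0 < c ∧ ∀ A : Matrix (Fin m) (Fin n) ℝ,
      c * ∑ p : Fin m × Fin n, (A p.1 p.2) ^ 2 ≤ trace (M * (A * Y * Aᵀ)) := by
  obtain ⟨R, hRR, hRt, hRdet⟩ := theta_sqrt_exists hM
  obtain ⟨S, hSS, hSt, hSdet⟩ := theta_sqrt_exists hY
  have key : ∀ A : Matrix (Fin m) (Fin n) ℝ,
      trace (M * (A * Y * Aᵀ)) = ∑ p : Fin m × Fin n, ((R * A * S) p.1 p.2) ^ 2 := by
    intro A
    rw [← theta_trace_mul_self_transpose (R * A * S)]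
    have : (R * A * S) * (R * A * S)ᵀ = R * (A * Y * Aᵀ) * R := by
      rw [transpose_mul, transpose_mul, hRt, hSt, ← hSS]
      simp only [Matrix.mul_assoc]
    rw [this, Matrix.trace_mul_cycle R (A * Y * Aᵀ) R, ← Matrix.mul_assoc, hRR,
      Matrix.mul_assoc]
  set K : ℝ := ∑ p : Fin m × Fin n, ∑ q : Fin m × Fin n, (R⁻¹ p.1 q.1 * S⁻¹ q.2 p.2) ^ 2 with hK
  have hKnn : 0 ≤ K := Finset.sum_nonneg fun p _ => Finset.sum_nonneg fun q _ => sq_nonneg _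
  have hK1 : (0:ℝ) < K + 1 := by linarith
  refine ⟨1 / (K + 1), by positivity, fun A => ?_⟩
  rw [key A]
  have hA : A = R⁻¹ * (R * A * S) * S⁻¹ := by
    rw [Matrix.mul_assoc, Matrix.mul_assoc, Matrix.mul_nonsing_inv S hSdet, Matrix.mul_one,
      ← Matrix.mul_assoc, Matrix.nonsing_inv_mul R hRdet, Matrix.one_mul]
  have entry : ∀ p : Fin m × Fin n,
      A p.1 p.2 = ∑ q : Fin m × Fin n, (R⁻¹ p.1 q.1 * S⁻¹ q.2 p.2) * (R * A * S) q.1 q.2 := by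
    intro p
    conv_lhs => rw [hA]
    rw [Fintype.sum_prod_type]
    simp only [mul_apply]
    rw [Finset.sum_comm]
    congr 1; ext k
    rw [Finset.sum_mul]
    congr 1; ext l
    ring
  have cs : ∀ p : Fin m × Fin n, (A p.1 p.2) ^ 2 ≤
      (∑ q : Fin m × Fin n, (R⁻¹ p.1 q.1 * S⁻¹ q.2 p.2) ^ 2) *
        ∑ q : Fin m × Fin n, ((R * A * S) q.1 q.2) ^ 2 := by
    intro p
    rw [entry p]
    exact Finset.sum_mul_sq_le_sq_mul_sq _ _ _
  have hBnn : 0 ≤ ∑ q : Fin m × Fin n, ((R * A * S) q.1 q.2) ^ 2 :=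
    Finset.sum_nonneg fun q _ => sq_nonneg _
  have total : ∑ p : Fin m × Fin n, (A p.1 p.2) ^ 2
      ≤ (K + 1) * ∑ q : Fin m × Fin n, ((R * A * S) q.1 q.2) ^ 2 := by
    calc ∑ p : Fin m × Fin n, (A p.1 p.2) ^ 2
        ≤ ∑ p : Fin m × Fin n, (∑ q : Fin m × Fin n, (R⁻¹ p.1 q.1 * S⁻¹ q.2 p.2) ^ 2) *
            ∑ q : Fin m × Fin n, ((R * A * S) q.1 q.2) ^ 2 := Finset.sum_le_sum fun p _ => cs p
      _ = K * ∑ q : Fin m × Fin n, ((R * A * S) q.1 q.2) ^ 2 := by rw [hK, Finset.sum_mul]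
      _ ≤ (K + 1) * ∑ q : Fin m × Fin n, ((R * A * S) q.1 q.2) ^ 2 := by nlinarith
  rw [div_mul_eq_mul_div, one_mul, div_le_iff₀ hK1]
  calc ∑ p : Fin m × Fin n, (A p.1 p.2) ^ 2
      ≤ (K + 1) * ∑ q : Fin m × Fin n, ((R * A * S) q.1 q.2) ^ 2 := total
    _ = (∑ q : Fin m × Fin n, ((R * A * S) q.1 q.2) ^ 2) * (K + 1) := mul_comm _ _

private lemma theta_lin_bound (M : Matrix (Fin m) (Fin m) ℝ) (W : Matrix (Fin m) (Fin n) ℝ) :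
    ∃ C : ℝ, 0 ≤ C ∧ ∀ A : Matrix (Fin m) (Fin n) ℝ,
      |trace (M * (A * Wᵀ))| ≤ C * ∑ p : Fin m × Fin n, |A p.1 p.2| := by
  set G : Matrix (Fin m) (Fin n) ℝ := Mᵀ * W with hG
  set C : ℝ := ∑ p : Fin m × Fin n, |G p.1 p.2| with hC
  have hCnn : 0 ≤ C := Finset.sum_nonneg fun p _ => abs_nonneg _
  refine ⟨C, hCnn, fun A => ?_⟩
  have key : trace (M * (A * Wᵀ)) = ∑ p : Fin m × Fin n, A p.1 p.2 * G p.1 p.2 := by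
    simp only [Matrix.trace, Matrix.diag_apply, mul_apply, hG, transpose_apply,
      Fintype.sum_prod_type, Finset.mul_sum, Finset.sum_mul]
    rw [Finset.sum_comm]
    congr 1; ext j
    rw [Finset.sum_comm]
    congr 1; ext k
    congr 1; ext i
    ring
  rw [key]
  calc |∑ p : Fin m × Fin n, A p.1 p.2 * G p.1 p.2|
      ≤ ∑ p : Fin m × Fin n, |A p.1 p.2 * G p.1 p.2| := Finset.abs_sum_le_sum_abs _ _
    _ ≤ ∑ p : Fin m × Fin n, |A p.1 p.2| * C := by
        refine Finset.sum_le_sum fun p _ => ?_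
        rw [abs_mul]
        refine mul_le_mul_of_nonneg_left ?_ (abs_nonneg _)
        exact Finset.single_le_sum (f := fun q : Fin m × Fin n => |G q.1 q.2|)
          (fun q _ => abs_nonneg _) (Finset.mem_univ p)
    _ = C * ∑ p : Fin m × Fin n, |A p.1 p.2| := by rw [← Finset.sum_mul, mul_comm]

end ThetaAux

/-- The theta series `Θ_M(Ω,Z) = Σ_{ξ ∈ ℤ^(m×n)} exp(πi·tr(M(ξΩξᵀ + 2ξZᵀ)))` converges
absolutely for `M` symmetric positive definite, `Ω ∈ ℍ_n` and `Z ∈ ℂ^(m×n)`. -/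
theorem theta_series_converges_absolutely (m n : ℕ)
    (M : Matrix (Fin m) (Fin m) ℝ) (hM : M.PosDef)
    (Ω : Matrix (Fin n) (Fin n) ℂ) (hΩ : Ω.IsSymm) (hIm : (Ω.map Complex.im).PosDef)
    (Z : Matrix (Fin m) (Fin n) ℂ) :
    Summable (fun ξ : Matrix (Fin m) (Fin n) ℤ =>
      ‖Complex.exp ((Real.pi : ℂ) * Complex.I *
        ((M.map Complex.ofReal) *
          (ξ.map (fun a => (a : ℂ)) * Ω * (ξ.map (fun a => (a : ℂ)))ᵀ +
            2 • (ξ.map (fun a => (a : ℂ)) * Zᵀ))).trace)‖) := by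
  obtain ⟨c, hc, hQ⟩ := theta_quad_lower_bound hM hIm
  obtain ⟨C, hCnn, hL⟩ := theta_lin_bound M (Z.map Complex.im)
  -- the one-variable comparison function
  set g : ℤ → ℝ := fun a => Real.exp (-Real.pi * (c * (a:ℝ)^2 - 2 * C * |(a:ℝ)|)) with hg
  have hgnn : ∀ a, 0 ≤ g a := fun a => Real.exp_nonneg _
  have hgsum : Summable g := by
    have h := summable_pow_mul_jacobiTheta₂_term_bound C hc 0
    refine h.congr fun a => ?_
    simp [hg, Int.cast_abs]
  -- summability of the product comparison function
  have hprod : Summable (fun ξ : Matrix (Fin m) (Fin n) ℤ => ∏ i, ∏ j, g (ξ i j)) := by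
    have hinner : Summable (fun y : Fin n → ℤ => ∏ j, g (y j)) :=
      theta_summable_pi_fin g hgnn hgsum n
    have hinnn : ∀ y : Fin n → ℤ, 0 ≤ ∏ j, g (y j) :=
      fun y => Finset.prod_nonneg fun j _ => hgnn _
    exact theta_summable_pi_fin (fun y : Fin n → ℤ => ∏ j, g (y j)) hinnn hinner m
  refine hprod.of_nonneg_of_le (fun ξ => norm_nonneg _) fun ξ => ?_
  rw [theta_term_norm]
  set A := ξ.map (fun a => (a : ℝ)) with hA
  have hQA := hQ A
  have hLA := hL A
  have step : -Real.pi * (trace (M * (A * (Ω.map Complex.im) * Aᵀ))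
      + 2 * trace (M * (A * (Z.map Complex.im)ᵀ)))
      ≤ ∑ p : Fin m × Fin n, (-Real.pi * (c * (A p.1 p.2)^2 - 2 * C * |A p.1 p.2|)) := by
    have h1 : c * ∑ p : Fin m × Fin n, (A p.1 p.2) ^ 2
        ≤ trace (M * (A * (Ω.map Complex.im) * Aᵀ)) := hQA
    have h2 : -(C * ∑ p : Fin m × Fin n, |A p.1 p.2|) ≤ trace (M * (A * (Z.map Complex.im)ᵀ)) := by
      have := neg_abs_le (trace (M * (A * (Z.map Complex.im)ᵀ)))
      linarith [hLA]
    have hsum : ∑ p : Fin m × Fin n, (-Real.pi * (c * (A p.1 p.2)^2 - 2 * C * |A p.1 p.2|))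
        = -Real.pi * (c * ∑ p : Fin m × Fin n, (A p.1 p.2)^2
            - 2 * C * ∑ p : Fin m × Fin n, |A p.1 p.2|) := by
      simp only [mul_sub, Finset.mul_sum, Finset.sum_sub_distrib]
    rw [hsum]
    have hpi := Real.pi_pos
    nlinarith [hQA, hLA, abs_nonneg (trace (M * (A * (Z.map Complex.im)ᵀ)))]
  calc Real.exp (-Real.pi * (trace (M * (A * (Ω.map Complex.im) * Aᵀ))
        + 2 * trace (M * (A * (Z.map Complex.im)ᵀ))))
      ≤ Real.exp (∑ p : Fin m × Fin n, (-Real.pi * (c * (A p.1 p.2)^2 - 2 * C * |A p.1 p.2|))) :=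
        Real.exp_le_exp.mpr step
    _ = ∏ p : Fin m × Fin n, Real.exp (-Real.pi * (c * (A p.1 p.2)^2 - 2 * C * |A p.1 p.2|)) :=
        Real.exp_sum _ _
    _ = ∏ i, ∏ j, g (ξ i j) := by
        rw [Fintype.prod_prod_type]
        refine Finset.prod_congr rfl fun i _ => Finset.prod_congr rfl fun j _ => ?_
        simp [hg, hA]
end
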